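/- Assume ᾱ ∉ A_0 and m = d. Almost surely the following holds: if (α̊, β̊) ∈ ℝ^d × (ℝ^d)^d satisfies ∇_α V_n(α̊, β̊) = 0 and ∇_β V_n(α̊, β̊) = 0, the d vectors (|β̂̊_ℓ(ω)|²)_{ω ∈ Ω_d}, ℓ = 0,…,d−1, form a basis of ℝ^d, and β̊_ℓ ∉ A_0 for every ℓ < d, then α̊ ∈ A_n and (α̊, β̊) is a Nash equilibrium of V_n, i.e. V_n(α̊, β) ≤ V_n(α̊, β̊) ≤ V_n(α, β̊) for all α ∈ ℝ^d and β ∈ (ℝ^d)^d. -/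

import Mathlib

open MeasureTheory ProbabilityTheory Filter
open scoped Real

noncomputable section

/-- Discrete Fourier transform of `x : ℝ^d` at frequency `ω = 2πk/d`. -/
def dft (d : ℕ) (x : Fin d → ℝ) (k : Fin d) : ℂ :=
  ∑ u : Fin d, (x u : ℂ) *
    Complex.exp (-(2 * Real.pi * Complex.I * ((k : ℕ) : ℂ) * ((u : ℕ) : ℂ)) / (d : ℂ))

/-- Circular convolution on `ℝ^d` (indices mod `d`). -/
def cconv (d : ℕ) (a z : Fin d → ℝ) : Fin d → ℝ := fun u => ∑ v : Fin d, a v * z (u - v)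

/-- Covariance matrix of `a ⋆ Z`, `Z ~ N(0, I_d)` white noise. -/
def covMat (d : ℕ) (a : Fin d → ℝ) : Matrix (Fin d) (Fin d) ℝ :=
  Matrix.of fun u u' => ∑ v : Fin d, a (u - v) * a (u' - v)

/-- Spectral (operator) norm of a matrix. -/
def specNorm (d : ℕ) (M : Matrix (Fin d) (Fin d) ℝ) : ℝ :=
  ‖Matrix.toEuclideanCLM (𝕜 := ℝ) M‖

/-- Euclidean norm. -/
def l2norm (d : ℕ) (x : Fin d → ℝ) : ℝ := Real.sqrt (∑ u : Fin d, x u ^ 2)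

/-- Empirical covariance matrix of the first `n` samples. -/
def empCov (d n : ℕ) (y : ℕ → Fin d → ℝ) : Matrix (Fin d) (Fin d) ℝ :=
  (n : ℝ)⁻¹ • ∑ i ∈ Finset.range n, Matrix.vecMulVec (y i) (y i)

/-- Empirical mean of `|ŷ(ω)|²` over the first `n` samples. -/
def empPS (d n : ℕ) (y : ℕ → Fin d → ℝ) (k : Fin d) : ℝ :=
  (n : ℝ)⁻¹ * ∑ i ∈ Finset.range n, Complex.normSq (dft d (y i) k)

/-- The consistent-generator set `A_n` (for a fixed sample `(z̄_i, z_i)_{i<n}`). -/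
def An (d n : ℕ) (abar : Fin d → ℝ) (zbar z : ℕ → Fin d → ℝ) : Set (Fin d → ℝ) :=
  {a | ∀ k : Fin d, Complex.normSq (dft d a k) =
      empPS d n (fun i => cconv d abar (zbar i)) k / empPS d n z k}


/-- The combined family of all Gaussian coordinates of the two sample sequences
`z̄` (at `false`) and `z` (at `true`). -/
def coords {Ω : Type*} (d : ℕ) (zbar z : ℕ → Ω → Fin d → ℝ) :
    Bool × ℕ × Fin d → Ω → ℝ :=
  fun p ω => if p.1 then z p.2.1 ω p.2.2 else zbar p.2.1 ω p.2.2

/-- `(z̄_i)` and `(z_i)` are mutually independent i.i.d. `N(0, I_d)` random vectors: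
all the real coordinates are independent standard Gaussians. -/
def IsWhiteNoisePair {Ω : Type*} [MeasureSpace Ω] (d : ℕ)
    (zbar z : ℕ → Ω → Fin d → ℝ) : Prop :=
  (∀ i, Measurable (zbar i)) ∧ (∀ i, Measurable (z i)) ∧
    iIndepFun (coords d zbar z) ℙ ∧
    ∀ p : Bool × ℕ × Fin d, Measure.map (coords d zbar z p) ℙ = gaussianReal 0 1

/-- `r_{n,ℓ}(α, β) = E_n(‖X ⋆ β_ℓ‖²) − E_n(‖(α ⋆ Z) ⋆ β_ℓ‖²)` for the convolutional
discriminator, given samples `x_i = xs i`, `z_i = zs i`. -/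
def rConv (d n : ℕ) (xs zs : ℕ → Fin d → ℝ) (a : Fin d → ℝ) (bl : Fin d → ℝ) : ℝ :=
  (n : ℝ)⁻¹ * ∑ i ∈ Finset.range n, ∑ u : Fin d, cconv d (xs i) bl u ^ 2
    - (n : ℝ)⁻¹ * ∑ i ∈ Finset.range n, ∑ u : Fin d, cconv d (cconv d a (zs i)) bl u ^ 2

/-- The convolutional-discriminator objective `V_n(α, β) = ∑_{ℓ<m} r_{n,ℓ}(α, β)²`. -/
def VConv (d n m : ℕ) (xs zs : ℕ → Fin d → ℝ) (a : Fin d → ℝ)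
    (b : Fin m → Fin d → ℝ) : ℝ :=
  ∑ ℓ : Fin m, rConv d n xs zs a (b ℓ) ^ 2

def eker (d : ℕ) (k u : Fin d) : ℂ :=
  Complex.exp (-(2 * Real.pi * Complex.I * ((k : ℕ) : ℂ) * ((u : ℕ) : ℂ)) / (d : ℂ))

lemma dft_eq (d : ℕ) (x : Fin d → ℝ) (k : Fin d) :
    dft d x k = ∑ u : Fin d, (x u : ℂ) * eker d k u := rfl

lemma eker_eq (d : ℕ) (k u : Fin d) :
    eker d k u = Complex.exp (((-(2 * Real.pi * k * u) / d : ℝ) : ℂ) * Complex.I) := by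
  unfold eker; congr 1; push_cast; ring

lemma normSq_eker (d : ℕ) (k u : Fin d) : Complex.normSq (eker d k u) = 1 := by
  rw [eker_eq, Complex.normSq_eq_norm_sq, Complex.norm_exp_ofReal_mul_I]; norm_num

lemma conj_eker (d : ℕ) (k u : Fin d) :
    (starRingEnd ℂ) (eker d k u) =
      Complex.exp ((((2 * Real.pi * k * u) / d : ℝ) : ℂ) * Complex.I) := by
  rw [eker_eq, ← Complex.exp_conj]
  congr 1
  rw [map_mul, Complex.conj_I, Complex.conj_ofReal]
  push_cast
  ring

lemma eker_mul_conj (d : ℕ) (k u v : Fin d) :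
    eker d k u * (starRingEnd ℂ) (eker d k v) =
      Complex.exp ((((2 * Real.pi * (((v:ℕ):ℝ) - ((u:ℕ):ℝ)) / d : ℝ)) : ℂ) * Complex.I) ^ (k : ℕ) := by
  rw [eker_eq, conj_eker, ← Complex.exp_add, ← Complex.exp_nat_mul]
  congr 1
  push_cast
  ring

lemma eker_orth (d : ℕ) (u v : Fin d) :
    ∑ k : Fin d, eker d k u * (starRingEnd ℂ) (eker d k v) =
      if u = v then (d : ℂ) else 0 := by
  have hd : (d : ℝ) ≠ 0 := by
    have : 0 < d := u.pos
    positivity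
  by_cases huv : u = v
  · subst huv
    simp only [if_pos rfl]
    have : ∀ k : Fin d, eker d k u * (starRingEnd ℂ) (eker d k u) = 1 := by
      intro k
      rw [Complex.mul_conj, normSq_eker]
      norm_num
    simp [this]
  · simp only [if_neg huv]
    set δ : ℝ := ((v:ℕ):ℝ) - ((u:ℕ):ℝ) with hδ
    set ζ : ℂ := Complex.exp (((2 * Real.pi * δ / d : ℝ) : ℂ) * Complex.I) with hζ
    have hsum : ∑ k : Fin d, eker d k u * (starRingEnd ℂ) (eker d k v)
        = ∑ i ∈ Finset.range d, ζ ^ i := by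
      rw [← Fin.sum_univ_eq_sum_range (fun i => ζ ^ i) d]
      exact Finset.sum_congr rfl fun k _ => eker_mul_conj d k u v
    have hδne : δ ≠ 0 := by
      simp only [hδ, sub_ne_zero]
      exact fun h => huv (Fin.ext (Nat.cast_injective h)).symm
    have hδlt : |δ| < d := by
      rw [abs_sub_lt_iff]
      constructor <;> push_cast <;> nlinarith [v.isLt, u.isLt, Nat.cast_nonneg (α := ℝ) (u:ℕ),
        Nat.cast_nonneg (α := ℝ) (v:ℕ), (Nat.cast_lt (α := ℝ)).2 v.isLt, (Nat.cast_lt (α := ℝ)).2 u.isLt]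
    have hζne : ζ ≠ 1 := by
      intro h
      rw [hζ, Complex.exp_eq_one_iff] at h
      obtain ⟨m, hm⟩ := h
      have hm' : ((2 * Real.pi * δ / d : ℝ) : ℂ) * Complex.I = (((m : ℝ) * (2 * Real.pi) : ℝ) : ℂ) * Complex.I := by
        rw [hm]; push_cast; ring
      have := mul_right_cancel₀ Complex.I_ne_zero hm'
      have hreal : 2 * Real.pi * δ / d = (m : ℝ) * (2 * Real.pi) := Complex.ofReal_inj.1 this
      have hδeq : δ = (m : ℝ) * d := by
        field_simp at hreal
        nlinarith [Real.pi_pos]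
      have hmne : (m : ℝ) ≠ 0 := by
        intro h0
        rw [h0, zero_mul] at hδeq
        exact hδne hδeq
      have h1 : (1 : ℝ) ≤ |(m : ℝ)| := by
        rcases Int.lt_or_lt_of_ne (fun h => hmne (by exact_mod_cast congrArg (Int.cast : ℤ → ℝ) h)) with h | h
        · rw [abs_of_nonpos (by exact_mod_cast h.le)]
          have : m ≤ -1 := by omega
          have : (m : ℝ) ≤ -1 := by exact_mod_cast this
          linarith
        · rw [abs_of_nonneg (by exact_mod_cast h.le)]
          exact_mod_cast h
      have : (d : ℝ) ≤ |δ| := by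
        rw [hδeq, abs_mul, Nat.abs_cast]
        nlinarith [abs_nonneg (m : ℝ), Nat.cast_nonneg (α := ℝ) d]
      linarith
    have hζd : ζ ^ d = 1 := by
      rw [hζ, ← Complex.exp_nat_mul]
      have : (d : ℂ) * (((2 * Real.pi * δ / d : ℝ) : ℂ) * Complex.I)
          = ((((v:ℕ):ℤ) - ((u:ℕ):ℤ) : ℤ) : ℂ) * (2 * Real.pi * Complex.I) := by
        have hdC : (d : ℂ) ≠ 0 := Nat.cast_ne_zero.2 (by exact_mod_cast fun h => hd (by rw [h]; norm_num))
        push_cast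
        field_simp
        rw [Complex.ofReal_sub]
        push_cast
        ring
      rw [this, Complex.exp_int_mul_two_pi_mul_I]
    rw [hsum, geom_sum_eq hζne, hζd]
    simp

lemma conj_dft (d : ℕ) (x : Fin d → ℝ) (k : Fin d) :
    (starRingEnd ℂ) (dft d x k) = ∑ v : Fin d, (x v : ℂ) * (starRingEnd ℂ) (eker d k v) := by
  rw [dft_eq, map_sum]
  exact Finset.sum_congr rfl fun v _ => by rw [map_mul, Complex.conj_ofReal]

lemma plancherel (d : ℕ) (x : Fin d → ℝ) :
    ∑ k : Fin d, Complex.normSq (dft d x k) = d * ∑ u : Fin d, x u ^ 2 := by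
  have key : ∑ k : Fin d, dft d x k * (starRingEnd ℂ) (dft d x k)
      = (d : ℂ) * ∑ u : Fin d, ((x u : ℂ)) ^ 2 := by
    have h1 : ∀ k : Fin d, dft d x k * (starRingEnd ℂ) (dft d x k)
        = ∑ u : Fin d, ∑ v : Fin d,
            (x u : ℂ) * (x v : ℂ) * (eker d k u * (starRingEnd ℂ) (eker d k v)) := by
      intro k
      rw [conj_dft, dft_eq, Finset.sum_mul_sum]
      exact Finset.sum_congr rfl fun u _ => Finset.sum_congr rfl fun v _ => by ring
    calc ∑ k : Fin d, dft d x k * (starRingEnd ℂ) (dft d x k)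
        = ∑ k : Fin d, ∑ u : Fin d, ∑ v : Fin d,
            (x u : ℂ) * (x v : ℂ) * (eker d k u * (starRingEnd ℂ) (eker d k v)) :=
          Finset.sum_congr rfl fun k _ => h1 k
      _ = ∑ u : Fin d, ∑ v : Fin d, (x u : ℂ) * (x v : ℂ) *
            (∑ k : Fin d, eker d k u * (starRingEnd ℂ) (eker d k v)) := by
          rw [Finset.sum_comm]
          refine Finset.sum_congr rfl fun u _ => ?_
          rw [Finset.sum_comm]
          refine Finset.sum_congr rfl fun v _ => ?_
          rw [Finset.mul_sum]
      _ = ∑ u : Fin d, ∑ v : Fin d, (x u : ℂ) * (x v : ℂ) *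
            (if u = v then (d : ℂ) else 0) := by
          refine Finset.sum_congr rfl fun u _ => Finset.sum_congr rfl fun v _ => ?_
          rw [eker_orth]
      _ = ∑ u : Fin d, (x u : ℂ) * (x u : ℂ) * (d : ℂ) := by
          refine Finset.sum_congr rfl fun u _ => ?_
          rw [Finset.sum_eq_single u]
          · simp
          · intro v _ hv
            simp [Ne.symm hv]
          · simp
      _ = (d : ℂ) * ∑ u : Fin d, ((x u : ℂ)) ^ 2 := by
          rw [Finset.mul_sum]
          exact Finset.sum_congr rfl fun u _ => by ring
  have lhs : ((∑ k : Fin d, Complex.normSq (dft d x k) : ℝ) : ℂ)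
      = ∑ k : Fin d, dft d x k * (starRingEnd ℂ) (dft d x k) := by
    push_cast
    exact Finset.sum_congr rfl fun k _ => (Complex.mul_conj _).symm
  have rhs : (((d : ℝ) * ∑ u : Fin d, x u ^ 2 : ℝ) : ℂ)
      = (d : ℂ) * ∑ u : Fin d, ((x u : ℂ)) ^ 2 := by push_cast; ring
  exact_mod_cast lhs.trans (key.trans rhs.symm)

lemma exp_period (d : ℕ) (hd : (d : ℂ) ≠ 0) (kk a : ℕ) :
    Complex.exp (-(2 * Real.pi * Complex.I * (kk : ℂ) * ((a % d : ℕ) : ℂ)) / d)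
      = Complex.exp (-(2 * Real.pi * Complex.I * (kk : ℂ) * ((a : ℕ) : ℂ)) / d) := by
  conv_rhs => rw [← Nat.div_add_mod a d]
  generalize a / d = q
  generalize a % d = r
  rw [show ((d * q + r : ℕ) : ℂ) = (d : ℂ) * q + r by push_cast; ring]
  obtain ⟨m, hsplit⟩ : ∃ m : ℤ, -(2 * Real.pi * Complex.I * (kk : ℂ) * ((d : ℂ) * q + r)) / d
      = -(2 * Real.pi * Complex.I * (kk : ℂ) * (r : ℂ)) / d
        + (m : ℂ) * (2 * Real.pi * Complex.I) :=
    ⟨-(kk * q : ℤ), by push_cast; field_simp; ring⟩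
  rw [hsplit, Complex.exp_add, Complex.exp_int_mul_two_pi_mul_I, mul_one]

lemma eker_add (d : ℕ) (k v t : Fin d) :
    eker d k (v + t) = eker d k v * eker d k t := by
  have hd : (d : ℂ) ≠ 0 := Nat.cast_ne_zero.2 k.pos.ne'
  unfold eker
  rw [← Complex.exp_add]
  have hval : ((v + t : Fin d) : ℕ) = ((v : ℕ) + (t : ℕ)) % d := Fin.val_add v t
  rw [hval, exp_period d hd]
  congr 1
  push_cast
  ring

lemma dft_cconv (d : ℕ) (a z : Fin d → ℝ) (k : Fin d) :
    dft d (cconv d a z) k = dft d a k * dft d z k := by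
  haveI : NeZero d := ⟨k.pos.ne'⟩
  rw [dft_eq (x := cconv d a z), dft_eq (x := a), dft_eq (x := z)]
  calc ∑ u : Fin d, ((cconv d a z u : ℝ) : ℂ) * eker d k u
      = ∑ u : Fin d, ∑ v : Fin d, (a v : ℂ) * (z (u - v) : ℂ) * eker d k u := by
        refine Finset.sum_congr rfl fun u _ => ?_
        rw [show ((cconv d a z u : ℝ) : ℂ) = ∑ v : Fin d, (a v : ℂ) * (z (u - v) : ℂ) by
          unfold cconv; push_cast; rfl]
        rw [Finset.sum_mul]
    _ = ∑ v : Fin d, ∑ u : Fin d, (a v : ℂ) * (z (u - v) : ℂ) * eker d k u :=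
        Finset.sum_comm
    _ = ∑ v : Fin d, (a v : ℂ) * eker d k v * ∑ t : Fin d, (z t : ℂ) * eker d k t := by
        refine Finset.sum_congr rfl fun v _ => ?_
        rw [show (∑ u : Fin d, (a v : ℂ) * (z (u - v) : ℂ) * eker d k u)
            = (a v : ℂ) * ∑ u : Fin d, (z (u - v) : ℂ) * eker d k u by
          rw [Finset.mul_sum]; exact Finset.sum_congr rfl fun u _ => by ring]
        have : ∑ u : Fin d, (z (u - v) : ℂ) * eker d k u
            = ∑ t : Fin d, (z ((t + v) - v) : ℂ) * eker d k (t + v) :=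
          (Equiv.sum_comp (Equiv.addRight v) (fun u => (z (u - v) : ℂ) * eker d k u)).symm
        rw [this]
        have : ∀ t : Fin d, (z ((t + v) - v) : ℂ) * eker d k (t + v)
            = (z t : ℂ) * eker d k t * eker d k v := by
          intro t
          rw [add_sub_cancel_right, eker_add]
          ring
        rw [Finset.sum_congr rfl fun t _ => this t, ← Finset.sum_mul]
        ring
    _ = (∑ u : Fin d, (a u : ℂ) * eker d k u) * ∑ u : Fin d, (z u : ℂ) * eker d k u := by
        rw [← Finset.sum_mul]

lemma sum_sq_cconv (d : ℕ) (hd : d ≠ 0) (x b : Fin d → ℝ) :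
    ∑ u : Fin d, (cconv d x b u) ^ 2 =
      (d : ℝ)⁻¹ * ∑ k : Fin d, Complex.normSq (dft d x k) * Complex.normSq (dft d b k) := by
  have hp := plancherel d (cconv d x b)
  have h2 : ∑ k : Fin d, Complex.normSq (dft d (cconv d x b) k)
      = ∑ k : Fin d, Complex.normSq (dft d x k) * Complex.normSq (dft d b k) := by
    refine Finset.sum_congr rfl fun k _ => ?_
    rw [dft_cconv, Complex.normSq_mul]
  have hdR : (d : ℝ) ≠ 0 := Nat.cast_ne_zero.2 hd
  rw [← h2, hp]
  field_simp

lemma rConv_eq (d n : ℕ) (hd : d ≠ 0) (xs zs : ℕ → Fin d → ℝ) (a bl : Fin d → ℝ) :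
    rConv d n xs zs a bl = (d : ℝ)⁻¹ * ∑ k : Fin d, Complex.normSq (dft d bl k) *
      (empPS d n xs k - Complex.normSq (dft d a k) * empPS d n zs k) := by
  unfold rConv empPS
  have h1 : ∀ i, ∑ u : Fin d, cconv d (xs i) bl u ^ 2
      = (d : ℝ)⁻¹ * ∑ k : Fin d, Complex.normSq (dft d (xs i) k) * Complex.normSq (dft d bl k) :=
    fun i => sum_sq_cconv d hd (xs i) bl
  have h2 : ∀ i, ∑ u : Fin d, cconv d (cconv d a (zs i)) bl u ^ 2
      = (d : ℝ)⁻¹ * ∑ k : Fin d,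
          Complex.normSq (dft d a k) * Complex.normSq (dft d (zs i) k) * Complex.normSq (dft d bl k) := by
    intro i
    rw [sum_sq_cconv d hd (cconv d a (zs i)) bl]
    congr 1
    refine Finset.sum_congr rfl fun k _ => ?_
    rw [dft_cconv, Complex.normSq_mul]
  rw [Finset.sum_congr rfl fun i _ => h1 i, Finset.sum_congr rfl fun i _ => h2 i]
  have e1 : ∑ i ∈ Finset.range n,
        ((d : ℝ)⁻¹ * ∑ k : Fin d, Complex.normSq (dft d (xs i) k) * Complex.normSq (dft d bl k))
      = (d : ℝ)⁻¹ * ∑ k : Fin d,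
          (∑ i ∈ Finset.range n, Complex.normSq (dft d (xs i) k)) * Complex.normSq (dft d bl k) := by
    rw [← Finset.mul_sum, Finset.sum_comm]
    congr 1
    exact Finset.sum_congr rfl fun k _ => by rw [← Finset.sum_mul]
  have e2 : ∑ i ∈ Finset.range n,
        ((d : ℝ)⁻¹ * ∑ k : Fin d, Complex.normSq (dft d a k) * Complex.normSq (dft d (zs i) k)
            * Complex.normSq (dft d bl k))
      = (d : ℝ)⁻¹ * ∑ k : Fin d, Complex.normSq (dft d a k)
          * (∑ i ∈ Finset.range n, Complex.normSq (dft d (zs i) k)) * Complex.normSq (dft d bl k) := by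
    rw [← Finset.mul_sum, Finset.sum_comm]
    congr 1
    refine Finset.sum_congr rfl fun k _ => ?_
    rw [Finset.mul_sum, Finset.sum_mul]
  rw [e1, e2]
  have key : ∀ (f g h : Fin d → ℝ), (∀ k, (n : ℝ)⁻¹ * f k - (n : ℝ)⁻¹ * g k = h k) →
      (n : ℝ)⁻¹ * ((d : ℝ)⁻¹ * ∑ k : Fin d, f k) - (n : ℝ)⁻¹ * ((d : ℝ)⁻¹ * ∑ k : Fin d, g k)
        = (d : ℝ)⁻¹ * ∑ k : Fin d, h k := by
    intro f g h hfg
    rw [← Finset.sum_congr rfl fun k (_ : k ∈ Finset.univ) => hfg k]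
    rw [Finset.sum_sub_distrib, ← Finset.mul_sum, ← Finset.mul_sum]
    ring
  exact key _ _ _ (fun k => by ring)

lemma dft_update (d : ℕ) (w : Fin d → ℝ) (v : Fin d) (t : ℝ) (k : Fin d) :
    dft d (Function.update w v t) k = dft d w k + ((t - w v : ℝ) : ℂ) * eker d k v := by
  rw [dft_eq, dft_eq]
  have h : ∀ u : Fin d, ((Function.update w v t u : ℝ) : ℂ) * eker d k u
      = (w u : ℂ) * eker d k u + (if u = v then ((t - w v : ℝ) : ℂ) * eker d k v else 0) := by
    intro u
    by_cases hu : u = v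
    · subst hu
      rw [Function.update_self, if_pos rfl]
      push_cast
      ring
    · rw [Function.update_of_ne hu, if_neg hu, add_zero]
  rw [Finset.sum_congr rfl fun u _ => h u, Finset.sum_add_distrib]
  congr 1
  simp

lemma normSq_add_real_mul (zc : ℂ) (s : ℝ) (E : ℂ) (hE : Complex.normSq E = 1) :
    Complex.normSq (zc + (s : ℂ) * E)
      = Complex.normSq zc + 2 * s * (zc * (starRingEnd ℂ) E).re + s ^ 2 := by
  rw [Complex.normSq_add]
  have h1 : Complex.normSq ((s : ℂ) * E) = s ^ 2 := by
    rw [Complex.normSq_mul, hE, Complex.normSq_ofReal]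
    ring
  have h2 : (zc * (starRingEnd ℂ) ((s : ℂ) * E)).re = s * (zc * (starRingEnd ℂ) E).re := by
    rw [map_mul, Complex.conj_ofReal, show zc * ((s : ℂ) * (starRingEnd ℂ) E)
      = (s : ℂ) * (zc * (starRingEnd ℂ) E) by ring, Complex.re_ofReal_mul]
  rw [h1, h2]
  ring

lemma euler_sum (d : ℕ) (w : Fin d → ℝ) (k : Fin d) :
    ∑ v : Fin d, w v * (dft d w k * (starRingEnd ℂ) (eker d k v)).re
      = Complex.normSq (dft d w k) := by
  have h : ∀ v : Fin d, w v * (dft d w k * (starRingEnd ℂ) (eker d k v)).re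
      = (dft d w k * ((w v : ℂ) * (starRingEnd ℂ) (eker d k v))).re := by
    intro v
    rw [show dft d w k * ((w v : ℂ) * (starRingEnd ℂ) (eker d k v))
      = (w v : ℂ) * (dft d w k * (starRingEnd ℂ) (eker d k v)) by ring, Complex.re_ofReal_mul]
  rw [Finset.sum_congr rfl fun v _ => h v, ← Complex.re_sum, ← Finset.mul_sum, ← conj_dft,
    Complex.mul_conj]
  simp

lemma hasDerivAt_VConv (d n : ℕ) (hd : d ≠ 0) (xs zs : ℕ → Fin d → ℝ)
    (a₀ : Fin d → ℝ) (b₀ : Fin d → Fin d → ℝ) (ℓ v : Fin d) :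
    HasDerivAt (fun t : ℝ => VConv d n d xs zs a₀
        (Function.update b₀ ℓ (Function.update (b₀ ℓ) v t)))
      (2 * rConv d n xs zs a₀ (b₀ ℓ) *
        ((d : ℝ)⁻¹ * ∑ k : Fin d, 2 * (dft d (b₀ ℓ) k * (starRingEnd ℂ) (eker d k v)).re *
          (empPS d n xs k - Complex.normSq (dft d a₀ k) * empPS d n zs k)))
      (b₀ ℓ v) := by
  set w : Fin d → ℝ := b₀ ℓ with hw
  set t₀ : ℝ := w v with ht₀
  set c : Fin d → ℝ := fun k => empPS d n xs k - Complex.normSq (dft d a₀ k) * empPS d n zs k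
    with hc
  set δ : Fin d → ℝ := fun k => (dft d w k * (starRingEnd ℂ) (eker d k v)).re with hδ
  -- the function splits as a constant plus ρ t ^ 2
  have hfun : (fun t : ℝ => VConv d n d xs zs a₀
      (Function.update b₀ ℓ (Function.update (b₀ ℓ) v t)))
      = fun t => (∑ ℓ' ∈ Finset.univ.erase ℓ, rConv d n xs zs a₀ (b₀ ℓ') ^ 2)
          + rConv d n xs zs a₀ (Function.update w v t) ^ 2 := by
    funext t
    unfold VConv
    rw [← Finset.sum_erase_add _ _ (Finset.mem_univ ℓ)]
    congr 1
    · exact Finset.sum_congr rfl fun ℓ' hℓ' => by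
        rw [Function.update_of_ne (Finset.ne_of_mem_erase hℓ')]
    · rw [Function.update_self]
  -- ρ as an explicit quadratic
  have hρ : (fun t : ℝ => rConv d n xs zs a₀ (Function.update w v t))
      = fun t => ((d : ℝ)⁻¹ * ∑ k : Fin d, Complex.normSq (dft d w k) * c k)
          + (((d : ℝ)⁻¹ * ∑ k : Fin d, 2 * δ k * c k) * (t - t₀)
            + ((d : ℝ)⁻¹ * ∑ k : Fin d, c k) * (t - t₀) ^ 2) := by
    funext t
    rw [rConv_eq d n hd xs zs a₀ (Function.update w v t)]
    have hterm : ∀ k : Fin d, Complex.normSq (dft d (Function.update w v t) k) *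
        (empPS d n xs k - Complex.normSq (dft d a₀ k) * empPS d n zs k)
        = Complex.normSq (dft d w k) * c k + (2 * δ k * c k * (t - t₀)
            + c k * (t - t₀) ^ 2) := by
      intro k
      rw [dft_update, normSq_add_real_mul _ _ _ (normSq_eker d k v)]
      simp only [hc, hδ, ht₀]
      ring
    rw [Finset.sum_congr rfl fun k _ => hterm k, Finset.sum_add_distrib,
      Finset.sum_add_distrib]
    rw [show (∑ k : Fin d, 2 * δ k * c k * (t - t₀))
      = (∑ k : Fin d, 2 * δ k * c k) * (t - t₀) from (Finset.sum_mul _ _ _).symm]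
    rw [show (∑ k : Fin d, c k * (t - t₀) ^ 2)
      = (∑ k : Fin d, c k) * (t - t₀) ^ 2 from (Finset.sum_mul _ _ _).symm]
    ring
  -- derivative of ρ
  have h1 : HasDerivAt (fun t : ℝ => t - t₀) 1 t₀ := (hasDerivAt_id t₀).sub_const t₀
  have hsq : HasDerivAt (fun t : ℝ => (t - t₀) ^ 2) 0 t₀ := by
    have := h1.fun_pow 2
    simpa using this
  have hρd : HasDerivAt (fun t : ℝ => rConv d n xs zs a₀ (Function.update w v t))
      ((d : ℝ)⁻¹ * ∑ k : Fin d, 2 * δ k * c k) t₀ := by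
    rw [hρ]
    have hlin : HasDerivAt (fun t : ℝ => ((d : ℝ)⁻¹ * ∑ k : Fin d, 2 * δ k * c k) * (t - t₀))
        ((d : ℝ)⁻¹ * ∑ k : Fin d, 2 * δ k * c k) t₀ := by
      simpa using h1.const_mul ((d : ℝ)⁻¹ * ∑ k : Fin d, 2 * δ k * c k)
    have hquad : HasDerivAt (fun t : ℝ => ((d : ℝ)⁻¹ * ∑ k : Fin d, c k) * (t - t₀) ^ 2)
        0 t₀ := by
      simpa using hsq.const_mul ((d : ℝ)⁻¹ * ∑ k : Fin d, c k)
    simpa using ((hlin.add hquad).const_add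
      ((d : ℝ)⁻¹ * ∑ k : Fin d, Complex.normSq (dft d w k) * c k))
  -- ρ t₀ = r_ℓ
  have hρt₀ : rConv d n xs zs a₀ (Function.update w v t₀) = rConv d n xs zs a₀ w := by
    rw [ht₀, Function.update_eq_self]
  rw [hfun]
  have := ((hρd.fun_pow 2).const_add (∑ ℓ' ∈ Finset.univ.erase ℓ, rConv d n xs zs a₀ (b₀ ℓ') ^ 2))
  rw [ht₀] at this ⊢
  refine this.congr_deriv ?_
  rw [hρt₀]
  simp only [hc, hδ, hw]
  ring


lemma rConv_eq_zero_of_stationary (d n : ℕ) (hd : d ≠ 0) (xs zs : ℕ → Fin d → ℝ)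
    (a₀ : Fin d → ℝ) (b₀ : Fin d → Fin d → ℝ)
    (hβ : ∀ ℓ v : Fin d, HasDerivAt (fun t : ℝ => VConv d n d xs zs a₀
        (Function.update b₀ ℓ (Function.update (b₀ ℓ) v t))) 0 (b₀ ℓ v))
    (ℓ : Fin d) : rConv d n xs zs a₀ (b₀ ℓ) = 0 := by
  set c : Fin d → ℝ := fun k => empPS d n xs k - Complex.normSq (dft d a₀ k) * empPS d n zs k
    with hc
  set r : ℝ := rConv d n xs zs a₀ (b₀ ℓ) with hr
  have hstat : ∀ v : Fin d,
      2 * r * ((d : ℝ)⁻¹ * ∑ k : Fin d,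
        2 * (dft d (b₀ ℓ) k * (starRingEnd ℂ) (eker d k v)).re * c k) = 0 := by
    intro v
    exact (hasDerivAt_VConv d n hd xs zs a₀ b₀ ℓ v).unique (hβ ℓ v)
  have hsum : ∑ v : Fin d, b₀ ℓ v * (2 * r * ((d : ℝ)⁻¹ * ∑ k : Fin d,
      2 * (dft d (b₀ ℓ) k * (starRingEnd ℂ) (eker d k v)).re * c k)) = 0 := by
    rw [Finset.sum_congr rfl fun v _ => by rw [hstat v, mul_zero]]
    simp
  have hswap : ∑ v : Fin d, b₀ ℓ v * (2 * r * ((d : ℝ)⁻¹ * ∑ k : Fin d,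
      2 * (dft d (b₀ ℓ) k * (starRingEnd ℂ) (eker d k v)).re * c k))
      = (4 * r * (d : ℝ)⁻¹) * ∑ k : Fin d, Complex.normSq (dft d (b₀ ℓ) k) * c k := by
    calc ∑ v : Fin d, b₀ ℓ v * (2 * r * ((d : ℝ)⁻¹ * ∑ k : Fin d,
          2 * (dft d (b₀ ℓ) k * (starRingEnd ℂ) (eker d k v)).re * c k))
        = ∑ v : Fin d, ∑ k : Fin d, (b₀ ℓ v *
            (dft d (b₀ ℓ) k * (starRingEnd ℂ) (eker d k v)).re) * ((4 * r * (d : ℝ)⁻¹) * c k) := by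
          refine Finset.sum_congr rfl fun v _ => ?_
          rw [Finset.mul_sum, Finset.mul_sum, Finset.mul_sum]
          exact Finset.sum_congr rfl fun k _ => by ring
      _ = ∑ k : Fin d, ∑ v : Fin d, (b₀ ℓ v *
            (dft d (b₀ ℓ) k * (starRingEnd ℂ) (eker d k v)).re) * ((4 * r * (d : ℝ)⁻¹) * c k) :=
          Finset.sum_comm
      _ = ∑ k : Fin d, Complex.normSq (dft d (b₀ ℓ) k) * ((4 * r * (d : ℝ)⁻¹) * c k) := by
          refine Finset.sum_congr rfl fun k _ => ?_
          rw [← Finset.sum_mul, euler_sum]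
      _ = (4 * r * (d : ℝ)⁻¹) * ∑ k : Fin d, Complex.normSq (dft d (b₀ ℓ) k) * c k := by
          rw [Finset.mul_sum]
          exact Finset.sum_congr rfl fun k _ => by ring
  have hrr : (d : ℝ)⁻¹ * ∑ k : Fin d, Complex.normSq (dft d (b₀ ℓ) k) * c k = r := by
    rw [hr, rConv_eq d n hd]
  have h4 : 4 * r * ((d : ℝ)⁻¹ * ∑ k : Fin d, Complex.normSq (dft d (b₀ ℓ) k) * c k) = 0 := by
    rw [← mul_assoc, ← hswap]
    exact hsum
  rw [hrr] at h4
  have : r * r = 0 := by nlinarith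
  exact mul_self_eq_zero.1 this

lemma c_eq_zero_of_span (d n : ℕ) (hd : d ≠ 0) (xs zs : ℕ → Fin d → ℝ)
    (a₀ : Fin d → ℝ) (b₀ : Fin d → Fin d → ℝ)
    (hr : ∀ ℓ : Fin d, rConv d n xs zs a₀ (b₀ ℓ) = 0)
    (hspan : Submodule.span ℝ
      (Set.range fun ℓ : Fin d => fun k : Fin d => Complex.normSq (dft d (b₀ ℓ) k)) = ⊤) :
    ∀ k : Fin d, empPS d n xs k - Complex.normSq (dft d a₀ k) * empPS d n zs k = 0 := by
  set c : Fin d → ℝ := fun k => empPS d n xs k - Complex.normSq (dft d a₀ k) * empPS d n zs k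
    with hc
  let φ : (Fin d → ℝ) →ₗ[ℝ] ℝ :=
    { toFun := fun x => ∑ k : Fin d, x k * c k
      map_add' := fun x y => by
        simp only [Pi.add_apply, add_mul, Finset.sum_add_distrib]
      map_smul' := fun m x => by
        simp only [Pi.smul_apply, smul_eq_mul, RingHom.id_apply, Finset.mul_sum, mul_assoc] }
  have hdR : (d : ℝ) ≠ 0 := Nat.cast_ne_zero.2 hd
  have hφg : ∀ ℓ : Fin d, φ (fun k => Complex.normSq (dft d (b₀ ℓ) k)) = 0 := by
    intro ℓ
    have h := hr ℓ
    rw [rConv_eq d n hd] at h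
    have : ∑ k : Fin d, Complex.normSq (dft d (b₀ ℓ) k) * c k = 0 := by
      by_contra hne
      exact hne (by
        have := mul_eq_zero.1 h
        rcases this with h' | h'
        · exact absurd h' (inv_ne_zero hdR)
        · exact h')
    exact this
  have hφ0 : φ = 0 := by
    apply LinearMap.ext_on hspan
    rintro x ⟨ℓ, rfl⟩
    simpa using hφg ℓ
  intro k
  have hk : φ (Pi.single k 1) = 0 := by rw [hφ0]; simp
  have h2 : ∑ j : Fin d, (Pi.single k (1 : ℝ) : Fin d → ℝ) j * c j = 0 := hk
  rw [Finset.sum_eq_single k (fun j _ hj => by simp [Pi.single_apply, hj]) (by simp)] at h2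
  simpa [hc] using h2

lemma main_det (d n : ℕ) (hd : d ≠ 0) (xs zs : ℕ → Fin d → ℝ)
    (a₀ : Fin d → ℝ) (b₀ : Fin d → Fin d → ℝ)
    (hβ : ∀ ℓ v : Fin d, HasDerivAt (fun t : ℝ => VConv d n d xs zs a₀
        (Function.update b₀ ℓ (Function.update (b₀ ℓ) v t))) 0 (b₀ ℓ v))
    (hspan : Submodule.span ℝ
      (Set.range fun ℓ : Fin d => fun k : Fin d => Complex.normSq (dft d (b₀ ℓ) k)) = ⊤)
    (hPZ : ∀ k : Fin d, empPS d n zs k ≠ 0) :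
    (∀ k : Fin d, Complex.normSq (dft d a₀ k) = empPS d n xs k / empPS d n zs k) ∧
    (∀ b : Fin d → Fin d → ℝ, VConv d n d xs zs a₀ b ≤ VConv d n d xs zs a₀ b₀) ∧
    (∀ a : Fin d → ℝ, VConv d n d xs zs a₀ b₀ ≤ VConv d n d xs zs a b₀) := by
  have hr : ∀ ℓ : Fin d, rConv d n xs zs a₀ (b₀ ℓ) = 0 :=
    rConv_eq_zero_of_stationary d n hd xs zs a₀ b₀ hβ
  have hc0 := c_eq_zero_of_span d n hd xs zs a₀ b₀ hr hspan
  have hrzero : ∀ bl : Fin d → ℝ, rConv d n xs zs a₀ bl = 0 := by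
    intro bl
    rw [rConv_eq d n hd]
    rw [Finset.sum_congr rfl fun k _ => by rw [hc0 k, mul_zero]]
    simp
  have hV0 : ∀ b : Fin d → Fin d → ℝ, VConv d n d xs zs a₀ b = 0 := by
    intro b
    unfold VConv
    rw [Finset.sum_congr rfl fun ℓ _ => by rw [hrzero (b ℓ)]]
    simp
  refine ⟨fun k => ?_, fun b => ?_, fun a => ?_⟩
  · rw [eq_div_iff (hPZ k)]
    have := hc0 k
    linarith
  · rw [hV0 b, hV0 b₀]
  · rw [hV0 b₀]
    exact Finset.sum_nonneg fun ℓ _ => sq_nonneg _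

lemma re_dft (d : ℕ) (x : Fin d → ℝ) (k : Fin d) :
    (dft d x k).re = ∑ u : Fin d, x u * (eker d k u).re := by
  rw [dft_eq, Complex.re_sum]
  exact Finset.sum_congr rfl fun u _ => Complex.re_ofReal_mul _ _

lemma eker_zero (d : ℕ) (hd : 1 ≤ d) (k : Fin d) :
    eker d k ⟨0, hd⟩ = 1 := by
  unfold eker
  simp

lemma ae_dft_z_ne_zero {Ω : Type*} [MeasureSpace Ω] [IsProbabilityMeasure (ℙ : Measure Ω)]
    (d : ℕ) (hd : 1 ≤ d) (zbar z : ℕ → Ω → Fin d → ℝ) (hwn : IsWhiteNoisePair d zbar z)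
    (k : Fin d) :
    ∀ᵐ ω ∂ℙ, dft d (z 0 ω) k ≠ 0 := by
  obtain ⟨hmbar, hm, hindep, hlaw⟩ := hwn
  -- coefficients and the scaled family
  set e : Fin d → ℝ := fun u => (eker d k u).re with he
  set g : Bool × ℕ × Fin d → Ω → ℝ := fun p ω => coords d zbar z p ω * e p.2.2 with hg
  have hcoords_meas : ∀ p : Bool × ℕ × Fin d, Measurable (coords d zbar z p) := by
    rintro ⟨b, i, u⟩
    cases b
    · exact (measurable_pi_apply u).comp (hmbar i)
    · exact (measurable_pi_apply u).comp (hm i)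
  have hg_meas : ∀ p, Measurable (g p) := fun p =>
    (hcoords_meas p).mul_const _
  have hg_indep : iIndepFun g ℙ := by
    have := hindep.comp (fun p => fun x : ℝ => x * e p.2.2)
      (fun p => measurable_id.mul_const _)
    exact this
  set u₀ : Fin d := ⟨0, hd⟩ with hu₀
  set i₀ : Bool × ℕ × Fin d := (true, 0, u₀) with hi₀
  set S : Finset (Bool × ℕ × Fin d) :=
    Finset.image (fun u : Fin d => (true, 0, u)) (Finset.univ.erase u₀) with hS
  have hi₀S : i₀ ∉ S := by
    simp only [hS, Finset.mem_image]
    rintro ⟨u, hu, huv⟩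
    have : u = u₀ := by
      simpa [hi₀, Prod.ext_iff] using huv
    exact (Finset.mem_erase.1 hu).1 this
  set Y : Ω → ℝ := ∑ p ∈ S, g p with hY
  set T : Ω → ℝ := g i₀ with hT
  have hYT_indep : IndepFun Y T ℙ :=
    hg_indep.indepFun_finsetSum_of_notMem hg_meas hi₀S
  have hY_meas : Measurable Y := by
    rw [hY]
    have : (∑ p ∈ S, g p) = fun ω => ∑ p ∈ S, g p ω := by
      funext ω; rw [Finset.sum_apply]
    rw [this]
    exact Finset.measurable_sum S fun p _ => hg_meas p
  have hT_meas : Measurable T := hg_meas i₀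
  have hT_eq : T = coords d zbar z i₀ := by
    funext ω
    simp only [hT, hg, hi₀, he]
    rw [eker_zero d hd k, Complex.one_re, mul_one]
  have hT_law : Measure.map T ℙ = gaussianReal 0 1 := by rw [hT_eq]; exact hlaw i₀
  -- decomposition of the real part
  have hdecomp : ∀ ω, (dft d (z 0 ω) k).re = T ω + Y ω := by
    intro ω
    rw [re_dft]
    have h0 : ∀ u : Fin d, z 0 ω u * e u = g (true, 0, u) ω := by
      intro u
      simp only [hg, coords]
      norm_num
    rw [Finset.sum_congr rfl fun u _ => h0 u]
    rw [← Finset.add_sum_erase _ _ (Finset.mem_univ u₀)]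
    congr 1
    rw [hY, Finset.sum_apply, hS, Finset.sum_image]
    intro a _ b _ hab
    simpa [Prod.ext_iff] using hab
  -- the bad event has probability zero
  have hs_meas : MeasurableSet {p : ℝ × ℝ | p.1 + p.2 = 0} :=
    (isClosed_eq (continuous_fst.add continuous_snd) continuous_const).measurableSet
  have hmap : Measure.map (fun ω => (Y ω, T ω)) ℙ
      = (Measure.map Y ℙ).prod (Measure.map T ℙ) :=
    (indepFun_iff_map_prod_eq_prod_map_map hY_meas.aemeasurable hT_meas.aemeasurable).1
      hYT_indep
  have hzero : ℙ {ω | T ω + Y ω = 0} = 0 := by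
    have hpre : {ω | T ω + Y ω = 0}
        = (fun ω => (Y ω, T ω)) ⁻¹' {p : ℝ × ℝ | p.1 + p.2 = 0} := by
      ext ω
      simp [add_comm]
    rw [hpre, ← Measure.map_apply (hY_meas.prodMk hT_meas) hs_meas, hmap, hT_law]
    rw [Measure.prod_apply hs_meas]
    have hslice : ∀ y : ℝ, (Prod.mk y ⁻¹' {p : ℝ × ℝ | p.1 + p.2 = 0}) = {-y} := by
      intro y
      ext t
      simp [eq_neg_iff_add_eq_zero, add_comm]
    rw [lintegral_congr fun y => by rw [hslice y]]
    have hg0 : ∀ y : ℝ, gaussianReal 0 1 ({-y} : Set ℝ) = 0 := fun y =>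
      gaussianReal_absolutelyContinuous 0 (one_ne_zero) (measure_singleton _)
    rw [lintegral_congr fun y => hg0 y]
    simp
  filter_upwards [measure_eq_zero_iff_ae_notMem.1 hzero] with ω hω hdft
  apply hω
  have : (dft d (z 0 ω) k).re = 0 := by rw [hdft]; rfl
  rw [hdecomp ω] at this
  exact this

lemma ae_empPS_ne_zero {Ω : Type*} [MeasureSpace Ω] [IsProbabilityMeasure (ℙ : Measure Ω)]
    (d n : ℕ) (hd : 1 ≤ d) (hn : 1 ≤ n) (zbar z : ℕ → Ω → Fin d → ℝ)
    (hwn : IsWhiteNoisePair d zbar z) :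
    ∀ᵐ ω ∂ℙ, ∀ k : Fin d, empPS d n (fun i => z i ω) k ≠ 0 := by
  rw [ae_all_iff]
  intro k
  filter_upwards [ae_dft_z_ne_zero d hd zbar z hwn k] with ω hω
  unfold empPS
  have hpos : 0 < ∑ i ∈ Finset.range n, Complex.normSq (dft d (z i ω) k) := by
    have h0 : (0 : ℕ) ∈ Finset.range n := Finset.mem_range.2 hn
    have hle : Complex.normSq (dft d (z 0 ω) k)
        ≤ ∑ i ∈ Finset.range n, Complex.normSq (dft d (z i ω) k) :=
      Finset.single_le_sum (f := fun i => Complex.normSq (dft d (z i ω) k))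
        (fun i _ => Complex.normSq_nonneg _) h0
    have := Complex.normSq_pos.2 hω
    linarith
  have hninv : (0 : ℝ) < (n : ℝ)⁻¹ := by
    have : (0 : ℝ) < n := by exact_mod_cast hn
    positivity
  positivity


theorem stmt15 {d n : ℕ} (hd : 1 ≤ d) (hn : 1 ≤ n)
    {Ω : Type*} [MeasureSpace Ω] [IsProbabilityMeasure (ℙ : Measure Ω)]
    (abar : Fin d → ℝ) (habar : ∀ k : Fin d, dft d abar k ≠ 0)
    (zbar z : ℕ → Ω → Fin d → ℝ) (hwn : IsWhiteNoisePair d zbar z) :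
    ∀ᵐ ω ∂ℙ, ∀ (a₀ : Fin d → ℝ) (b₀ : Fin d → Fin d → ℝ),
      -- `∇_α V_n(α̊, β̊) = 0`
      (∀ u : Fin d,
        HasDerivAt (fun t : ℝ =>
          VConv d n d (fun i => cconv d abar (zbar i ω)) (fun i => z i ω)
            (Function.update a₀ u t) b₀) 0 (a₀ u)) →
      -- `∇_β V_n(α̊, β̊) = 0`
      (∀ ℓ v : Fin d,
        HasDerivAt (fun t : ℝ =>
          VConv d n d (fun i => cconv d abar (zbar i ω)) (fun i => z i ω) a₀
            (Function.update b₀ ℓ (Function.update (b₀ ℓ) v t))) 0 (b₀ ℓ v)) →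
      -- `(|β̂̊_ℓ(ω)|²)_{ℓ<d}` form a basis of `ℝ^d`
      (LinearIndependent ℝ
          (fun ℓ : Fin d => fun k : Fin d => Complex.normSq (dft d (b₀ ℓ) k)) ∧
        Submodule.span ℝ
          (Set.range fun ℓ : Fin d => fun k : Fin d => Complex.normSq (dft d (b₀ ℓ) k))
            = ⊤) →
      -- `β̊_ℓ ∉ A_0` for every `ℓ`
      (∀ ℓ k : Fin d, dft d (b₀ ℓ) k ≠ 0) →
      a₀ ∈ An d n abar (fun i => zbar i ω) (fun i => z i ω) ∧
        (∀ b : Fin d → Fin d → ℝ,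
          VConv d n d (fun i => cconv d abar (zbar i ω)) (fun i => z i ω) a₀ b ≤
            VConv d n d (fun i => cconv d abar (zbar i ω)) (fun i => z i ω) a₀ b₀) ∧
        (∀ a : Fin d → ℝ,
          VConv d n d (fun i => cconv d abar (zbar i ω)) (fun i => z i ω) a₀ b₀ ≤
            VConv d n d (fun i => cconv d abar (zbar i ω)) (fun i => z i ω) a b₀) := by
  have hd0 : d ≠ 0 := Nat.one_le_iff_ne_zero.1 hd
  filter_upwards [ae_empPS_ne_zero d n hd hn zbar z hwn] with ω hPZ
  intro a₀ b₀ _hα hβ hbasis _hb0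
  obtain ⟨h1, h2, h3⟩ := main_det d n hd0 (fun i => cconv d abar (zbar i ω))
    (fun i => z i ω) a₀ b₀ hβ hbasis.2 hPZ
  exact ⟨h1, h2, h3⟩
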